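/- Let f be a concave size function, let S* be an optimal solution to f-DS, and let S_n, S_{n−1}, …, S_1 be the subsets produced by the greedy peeling on G. Then w(S*)/f(|S*|) ≤ 3 · max_{1≤i≤n} w(S_i)/f(i); that is, the greedy peeling is a 3-approximation algorithm for f-DS with concave size function f. -/
import Mathlib

structure WGraph (V : Type) [Fintype V] [DecidableEq V] where
  E : Finset (Sym2 V)
  not_diag : ∀ e ∈ E, ¬ e.IsDiag
  w : Sym2 V → ℝ
  w_pos : ∀ e ∈ E, 0 < w e

variable {V : Type} [Fintype V] [DecidableEq V]

def WGraph.wS (G : WGraph V) (S : Finset V) : ℝ :=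
  ∑ e ∈ G.E.filter (fun e => e ∈ S.sym2), G.w e

def WGraph.deg (G : WGraph V) (S : Finset V) (v : V) : ℝ :=
  ∑ u ∈ S.filter (fun u => s(u, v) ∈ G.E), G.w s(u, v)

namespace WGraph

lemma wS_nonneg (G : WGraph V) (S : Finset V) : 0 ≤ G.wS S :=
  Finset.sum_nonneg fun e he => (G.w_pos e (Finset.mem_filter.mp he).1).le

lemma wS_empty (G : WGraph V) : G.wS (∅ : Finset V) = 0 := by
  unfold wS
  rw [Finset.sym2_empty]
  simp

lemma wS_mono (G : WGraph V) {S T : Finset V} (h : S ⊆ T) : G.wS S ≤ G.wS T := by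
  apply Finset.sum_le_sum_of_subset_of_nonneg
  · intro e he
    obtain ⟨h1, h2⟩ := Finset.mem_filter.mp he
    exact Finset.mem_filter.mpr ⟨h1, Finset.sym2_mono h h2⟩
  · intro e he _; exact (G.w_pos e (Finset.mem_filter.mp he).1).le

lemma deg_nonneg (G : WGraph V) (S : Finset V) (v : V) : 0 ≤ G.deg S v :=
  Finset.sum_nonneg fun u hu => (G.w_pos _ (Finset.mem_filter.mp hu).2).le

lemma deg_mono (G : WGraph V) {S T : Finset V} (h : S ⊆ T) (v : V) :
    G.deg S v ≤ G.deg T v := by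
  apply Finset.sum_le_sum_of_subset_of_nonneg (Finset.filter_subset_filter _ h)
  intro u hu _; exact (G.w_pos _ (Finset.mem_filter.mp hu).2).le

lemma self_notMem (G : WGraph V) (v : V) : s(v, v) ∉ G.E := by
  intro h
  exact G.not_diag _ h (Sym2.mk_isDiag_iff.mpr rfl)

/-- Removing a vertex from the degree set. -/
lemma deg_erase (G : WGraph V) {S : Finset V} {v : V} (hv : v ∈ S) (u : V) :
    G.deg S u = G.deg (S.erase v) u + (if s(v, u) ∈ G.E then G.w s(v, u) else 0) := by
  unfold deg
  rw [Finset.filter_erase]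
  by_cases h : s(v, u) ∈ G.E
  · rw [if_pos h]
    have hvmem : v ∈ S.filter (fun x => s(x, u) ∈ G.E) := Finset.mem_filter.mpr ⟨hv, h⟩
    rw [Finset.sum_erase_add _ _ hvmem]
  · rw [if_neg h]
    have hvmem : v ∉ S.filter (fun x => s(x, u) ∈ G.E) := by
      simp only [Finset.mem_filter]; tauto
    rw [Finset.erase_eq_of_notMem hvmem, add_zero]

/-- The key identity: removing a vertex removes exactly its degree worth of edges. -/
lemma wS_erase (G : WGraph V) {S : Finset V} {v : V} (hv : v ∈ S) :
    G.wS S = G.wS (S.erase v) + G.deg S v := by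
  classical
  unfold wS deg
  have hsplit : G.E.filter (fun e => e ∈ S.sym2) =
      G.E.filter (fun e => e ∈ (S.erase v).sym2) ∪
      G.E.filter (fun e => e ∈ S.sym2 ∧ v ∈ e) := by
    ext e
    simp only [Finset.mem_union, Finset.mem_filter]
    constructor
    · rintro ⟨he, hS⟩
      by_cases hve : v ∈ e
      · exact Or.inr ⟨he, hS, hve⟩
      · refine Or.inl ⟨he, ?_⟩
        rw [Finset.mem_sym2_iff] at hS ⊢
        intro y hy
        exact Finset.mem_erase.mpr ⟨fun h => hve (h ▸ hy), hS y hy⟩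
    · rintro (⟨he, hS⟩ | ⟨he, hS, _⟩)
      · exact ⟨he, Finset.sym2_mono (Finset.erase_subset _ _) hS⟩
      · exact ⟨he, hS⟩
  have hdisj : Disjoint (G.E.filter (fun e => e ∈ (S.erase v).sym2))
      (G.E.filter (fun e => e ∈ S.sym2 ∧ v ∈ e)) := by
    rw [Finset.disjoint_left]
    rintro e he1 he2
    obtain ⟨_, h1⟩ := Finset.mem_filter.mp he1
    obtain ⟨_, _, hve⟩ := Finset.mem_filter.mp he2
    rw [Finset.mem_sym2_iff] at h1
    exact Finset.notMem_erase v S (h1 v hve)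
  rw [hsplit, Finset.sum_union hdisj]
  congr 1
  refine (Finset.sum_bij (fun u _ => s(u, v)) ?_ ?_ ?_ ?_).symm
  · intro u hu
    obtain ⟨huS, huE⟩ := Finset.mem_filter.mp hu
    refine Finset.mem_filter.mpr ⟨huE, Finset.mk_mem_sym2_iff.mpr ⟨huS, hv⟩, ?_⟩
    simp [Sym2.mem_iff]
  · intro u1 hu1 u2 hu2 heq
    obtain ⟨_, huE1⟩ := Finset.mem_filter.mp hu1
    have hne1 : u1 ≠ v := fun h => G.self_notMem v (h ▸ huE1)
    rcases Sym2.eq_iff.mp heq with ⟨h, _⟩ | ⟨h1, h2⟩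
    · exact h
    · exact absurd h1 hne1
  · intro e he
    obtain ⟨heE, heS, hve⟩ := Finset.mem_filter.mp he
    obtain ⟨u, rfl⟩ := Sym2.mem_iff_exists.mp hve
    have huS : u ∈ S := by
      rw [Finset.mem_sym2_iff] at heS
      exact heS u (by simp [Sym2.mem_iff])
    refine ⟨u, Finset.mem_filter.mpr ⟨huS, by rwa [Sym2.eq_swap]⟩, Sym2.eq_swap⟩
  · intro u hu; rfl

lemma handshake (G : WGraph V) (S : Finset V) :
    ∑ v ∈ S, G.deg S v = 2 * G.wS S := by
  classical
  induction S using Finset.induction_on with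
  | empty => simp [wS_empty, deg]
  | @insert a S ha ih =>
    have haT : a ∈ insert a S := Finset.mem_insert_self a S
    have hTe : (insert a S).erase a = S := Finset.erase_insert ha
    have hdega : G.deg (insert a S) a = G.deg S a := by
      have := G.deg_erase haT a
      rwa [hTe, if_neg (G.self_notMem a), add_zero] at this
    have hdeg : ∀ v ∈ S, G.deg (insert a S) v
        = G.deg S v + (if s(a, v) ∈ G.E then G.w s(a, v) else 0) := by
      intro v _
      have := G.deg_erase haT v
      rwa [hTe] at this
    have hsum : ∑ v ∈ S, (if s(a, v) ∈ G.E then G.w s(a, v) else 0) = G.deg S a := by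
      rw [← Finset.sum_filter]
      unfold deg
      refine Finset.sum_congr ?_ ?_
      · apply Finset.filter_congr
        intro x _
        rw [Sym2.eq_swap]
      · intro x _
        rw [Sym2.eq_swap]
    have hw : G.wS (insert a S) = G.wS S + G.deg S a := by
      have h := G.wS_erase haT
      rwa [hTe, hdega] at h
    rw [Finset.sum_insert ha, Finset.sum_congr rfl hdeg, Finset.sum_add_distrib,
      ih, hsum, hdega, hw]
    ring

end WGraph

/-- Repeatedly removing low-degree vertices yields a "core" with min degree ≥ c,
    losing at most c per removed vertex. -/
lemma WGraph.exists_core (G : WGraph V) (c : ℝ) : ∀ H : Finset V,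
    ∃ H', H' ⊆ H ∧ (∀ v ∈ H', c ≤ G.deg H' v) ∧
      G.wS H - c * ((H.card : ℝ) - H'.card) ≤ G.wS H' := by
  intro H
  induction H using Finset.strongInductionOn with
  | _ H ih =>
    by_cases h : ∀ v ∈ H, c ≤ G.deg H v
    · exact ⟨H, subset_rfl, h, by simp⟩
    · push_neg at h
      obtain ⟨v, hv, hdeg⟩ := h
      obtain ⟨H', hsub, hmin, hw⟩ := ih (H.erase v) (Finset.erase_ssubset hv)
      refine ⟨H', hsub.trans (Finset.erase_subset _ _), hmin, ?_⟩
      have hw2 := G.wS_erase hv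
      have hcard : ((H.erase v).card : ℝ) = (H.card : ℝ) - 1 := by
        rw [Finset.card_erase_of_mem hv,
          Nat.cast_sub (Finset.card_pos.mpr ⟨v, hv⟩), Nat.cast_one]
      rw [hcard] at hw
      have expand : c * ((H.card : ℝ) - H'.card)
          = c * ((H.card : ℝ) - 1 - (H'.card : ℝ)) + c := by ring
      rw [expand]
      linarith [hdeg.le]



lemma f_ratio (f : ℕ → ℝ) (hf0 : f 0 = 0)
    (hconc : ∀ x : ℕ, f x - 2 * f (x + 1) + f (x + 2) ≤ 0) :
    ∀ k i : ℕ, 1 ≤ k → k ≤ i → (k : ℝ) * f i ≤ (i : ℝ) * f k := by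
  have hΔ : ∀ x y : ℕ, x ≤ y → f (y + 1) - f y ≤ f (x + 1) - f x := by
    intro x y hxy
    induction y, hxy using Nat.le_induction with
    | base => exact le_refl _
    | succ y hy ih => have := hconc y; linarith
  have hsum : ∀ x : ℕ, f x = ∑ j ∈ Finset.range x, (f (j + 1) - f j) := by
    intro x
    induction x with
    | zero => simp [hf0]
    | succ x ih => rw [Finset.sum_range_succ, ← ih]; ring
  have hstep : ∀ x : ℕ, (x : ℝ) * f (x + 1) ≤ ((x : ℝ) + 1) * f x := by
    intro x
    have h1 : (Finset.range x).card • (f (x + 1) - f x)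
        ≤ ∑ j ∈ Finset.range x, (f (j + 1) - f j) :=
      Finset.card_nsmul_le_sum _ _ _ (fun j hj => hΔ j x (Finset.mem_range.mp hj).le)
    rw [Finset.card_range, nsmul_eq_mul, ← hsum] at h1
    nlinarith [h1]
  intro k i hk hki
  induction i, hki using Nat.le_induction with
  | base => exact le_refl _
  | succ i hi ih =>
    have hipos : (0 : ℝ) < (i : ℝ) := by
      have : 1 ≤ i := le_trans hk hi
      exact_mod_cast Nat.lt_of_lt_of_le Nat.zero_lt_one this
    have hknn : (0 : ℝ) ≤ (k : ℝ) := by positivity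
    have h1 := mul_le_mul_of_nonneg_left (hstep i) hknn
    have h2 := mul_le_mul_of_nonneg_left ih (by positivity : (0 : ℝ) ≤ (i : ℝ) + 1)
    have h3 : (i : ℝ) * ((k : ℝ) * f (i + 1)) ≤ (i : ℝ) * (((i : ℝ) + 1) * f k) := by
      nlinarith [h1, h2]
    have h4 := le_of_mul_le_mul_left h3 hipos
    push_cast
    linarith

theorem stmt19 (G : WGraph V) (hE : G.E.Nonempty)
    (n : ℕ) (hn : n = Fintype.card V) (hn1 : 1 ≤ n)
    (f : ℕ → ℝ) (hmono : Monotone f) (hf0 : f 0 = 0) (hfpos : ∀ x, 1 ≤ x → 0 < f x)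
    (hconc : ∀ x : ℕ, f x - 2 * f (x + 1) + f (x + 2) ≤ 0)
    (Sstar : Finset V) (hne : Sstar.Nonempty)
    (hopt : ∀ S : Finset V, S.Nonempty → G.wS S / f S.card ≤ G.wS Sstar / f Sstar.card)
    (Ss : ℕ → Finset V) (hSn : Ss n = Finset.univ)
    (hpeel : ∀ i, 2 ≤ i → i ≤ n → ∃ v ∈ Ss i,
      (∀ u ∈ Ss i, G.deg (Ss i) v ≤ G.deg (Ss i) u) ∧ Ss (i - 1) = (Ss i).erase v) :
    G.wS Sstar / f Sstar.card ≤
      3 * ((Finset.Icc 1 n).sup' (Finset.nonempty_Icc.mpr hn1)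
            fun i => G.wS (Ss i) / f i) := by
  classical
  set k := Sstar.card with hk
  have hk1 : 1 ≤ k := Finset.card_pos.mpr hne
  have hkn : k ≤ n := by rw [hn, ← Finset.card_univ]; exact Finset.card_le_univ Sstar
  have hfk : 0 < f k := hfpos k hk1
  have hkR : (0 : ℝ) < (k : ℝ) := by exact_mod_cast hk1
  -- positivity of the optimum
  have hratio : 0 < G.wS Sstar / f k := by
    obtain ⟨e, he⟩ := hE
    obtain ⟨a, b, rfl⟩ : ∃ a b, e = s(a, b) := by
      induction e using Sym2.ind with | _ a b => exact ⟨a, b, rfl⟩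
    have hab : a ≠ b := fun h => G.not_diag _ he (Sym2.mk_isDiag_iff.mpr h)
    have hS0 : G.w s(a, b) ≤ G.wS {a, b} := by
      apply Finset.single_le_sum (f := fun e => G.w e)
      · intro e he'; exact (G.w_pos e (Finset.mem_filter.mp he').1).le
      · refine Finset.mem_filter.mpr ⟨he, Finset.mk_mem_sym2_iff.mpr ⟨?_, ?_⟩⟩ <;> simp
    have hcard2 : ({a, b} : Finset V).card = 2 := Finset.card_pair hab
    have h0 := hopt {a, b} ⟨a, by simp⟩
    rw [hcard2] at h0
    exact lt_of_lt_of_le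
      (div_pos (lt_of_lt_of_le (G.w_pos _ he) hS0) (hfpos 2 (by norm_num))) h0
  have hwpos : 0 < G.wS Sstar := by
    by_contra h
    push_neg at h
    have : G.wS Sstar / f k ≤ 0 := div_nonpos_of_nonpos_of_nonneg h hfk.le
    linarith
  -- extract a core of Sstar with min degree ≥ c := (2/3) wS(Sstar)/k
  set c : ℝ := 2 * G.wS Sstar / (3 * (k : ℝ)) with hc
  have hc0 : 0 ≤ c := by positivity
  obtain ⟨H', hH'sub, hH'deg, hH'w⟩ := G.exists_core c Sstar
  have hck : c * (3 * (k : ℝ)) = 2 * G.wS Sstar := by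
    rw [hc]; field_simp
  have hH'w3 : G.wS Sstar / 3 ≤ G.wS H' := by
    have hcardnn : (0 : ℝ) ≤ (H'.card : ℝ) := by positivity
    have hcardk : ((Sstar.card : ℝ)) = (k : ℝ) := by rw [hk]
    have h1 : c * ((Sstar.card : ℝ) - H'.card) ≤ c * k := by
      apply mul_le_mul_of_nonneg_left _ hc0
      rw [hcardk]; linarith
    nlinarith [hH'w, h1, hck]
  have hH'ne : H'.Nonempty := by
    rcases Finset.eq_empty_or_nonempty H' with h | h
    · rw [h, G.wS_empty] at hH'w3; linarith
    · exact h
  -- cardinalities and monotonicity of the peeling sequence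
  have hcard : ∀ i, 1 ≤ i → i ≤ n → (Ss i).card = i := by
    have key : ∀ d i, i + d = n → 1 ≤ i → (Ss i).card = i := by
      intro d
      induction d with
      | zero =>
        intro i h _
        have : i = n := by omega
        subst this
        rw [hSn, Finset.card_univ, ← hn]
      | succ d ih =>
        intro i h h1
        obtain ⟨v, hv, _, he'⟩ := hpeel (i + 1) (by omega) (by omega)
        have hci := ih (i + 1) (by omega) (by omega)
        have h2 : i + 1 - 1 = i := by omega
        rw [h2] at he'
        rw [he', Finset.card_erase_of_mem hv, hci]
        omega
    exact fun i h1 h2 => key (n - i) i (by omega) h1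
  have hsub : ∀ i j, 1 ≤ i → i ≤ j → j ≤ n → Ss i ⊆ Ss j := by
    have key : ∀ d i, 1 ≤ i → i + d ≤ n → Ss i ⊆ Ss (i + d) := by
      intro d
      induction d with
      | zero => intro i _ _; exact subset_rfl
      | succ d ih =>
        intro i h1 h2
        have hsub1 := ih i h1 (by omega)
        obtain ⟨v, hv, _, he'⟩ := hpeel (i + d + 1) (by omega) (by omega)
        have h3 : i + d + 1 - 1 = i + d := by omega
        rw [h3] at he'
        refine hsub1.trans ?_
        show Ss (i + d) ⊆ Ss (i + d + 1)
        rw [he']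
        exact Finset.erase_subset _ _
    intro i j h1 hij hj
    have := key (j - i) i h1 (by omega)
    rwa [show i + (j - i) = j by omega] at this
  -- the first index (from below) at which H' is contained in Ss i
  let P : ℕ → Prop := fun i => 1 ≤ i ∧ H' ⊆ Ss i
  have hPn : P n := ⟨hn1, by rw [hSn]; exact Finset.subset_univ H'⟩
  have hex : ∃ i, P i := ⟨n, hPn⟩
  set i0 := Nat.find hex with hi0def
  have hi0P : P i0 := Nat.find_spec hex
  have hi0n : i0 ≤ n := Nat.find_le hPn
  -- main claim: some good index exists
  have main : ∃ i, 1 ≤ i ∧ i ≤ n ∧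
      G.wS Sstar / f k ≤ 3 * (G.wS (Ss i) / f i) := by
    rcases le_or_gt i0 k with hcase | hcase
    · -- H' ⊆ Ss k, so Ss k is already heavy
      refine ⟨k, hk1, hkn, ?_⟩
      have hHk : H' ⊆ Ss k := hi0P.2.trans (hsub i0 k hi0P.1 hcase hkn)
      have hwk : G.wS Sstar / 3 ≤ G.wS (Ss k) := le_trans hH'w3 (G.wS_mono hHk)
      rw [mul_div_assoc'] at *
      calc G.wS Sstar / f k ≤ (3 * G.wS (Ss k)) / f k :=
            (div_le_div_iff_of_pos_right hfk).mpr (by linarith)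
        _ = 3 * G.wS (Ss k) / f k := rfl
    · -- the vertex peeled from Ss i0 lies in H', so Ss i0 has min degree ≥ c
      have h2i0 : 2 ≤ i0 := by omega
      obtain ⟨v, hv, hmin, he'⟩ := hpeel i0 h2i0 hi0n
      have hvH' : v ∈ H' := by
        by_contra hvn
        have hsub' : H' ⊆ Ss (i0 - 1) := by
          rw [he']
          intro x hx
          exact Finset.mem_erase.mpr ⟨fun hxv => hvn (hxv ▸ hx), hi0P.2 hx⟩
        exact Nat.find_min hex (show i0 - 1 < i0 by omega) ⟨by omega, hsub'⟩
      have hdegbound : ∀ u ∈ Ss i0, c ≤ G.deg (Ss i0) u := fun u hu =>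
        le_trans (le_trans (hH'deg v hvH') (G.deg_mono hi0P.2 v)) (hmin u hu)
      have hhs := G.handshake (Ss i0)
      have hcount : (Ss i0).card = i0 := hcard i0 (by omega) hi0n
      have hsumge : (i0 : ℝ) * c ≤ 2 * G.wS (Ss i0) := by
        have h5 := Finset.card_nsmul_le_sum (Ss i0) (G.deg (Ss i0)) c hdegbound
        rw [hcount, nsmul_eq_mul] at h5
        linarith
      have hfi : 0 < f i0 := hfpos i0 (by omega)
      have hratio_f : (k : ℝ) * f i0 ≤ (i0 : ℝ) * f k :=
        f_ratio f hf0 hconc k i0 hk1 hcase.le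
      -- i0 * wS(Sstar) ≤ 3 * wS(Ss i0) * k
      have hA : (i0 : ℝ) * G.wS Sstar ≤ 3 * G.wS (Ss i0) * k := by
        have h6 := mul_le_mul_of_nonneg_right hsumge
          (by positivity : (0 : ℝ) ≤ 3 * (k : ℝ))
        nlinarith [h6, hck]
      have hB : (k : ℝ) * (G.wS Sstar * f i0) ≤ (k : ℝ) * (3 * G.wS (Ss i0) * f k) := by
        nlinarith [mul_le_mul_of_nonneg_left hratio_f hwpos.le,
          mul_le_mul_of_nonneg_right hA hfk.le]
      have hfin : G.wS Sstar * f i0 ≤ 3 * G.wS (Ss i0) * f k :=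
        le_of_mul_le_mul_left hB hkR
      refine ⟨i0, by omega, hi0n, ?_⟩
      rw [mul_div_assoc']
      rw [div_le_div_iff₀ hfk hfi]
      linarith
  obtain ⟨i, hi1, hin, hineq⟩ := main
  have hmem : i ∈ Finset.Icc 1 n := Finset.mem_Icc.mpr ⟨hi1, hin⟩
  have hle := Finset.le_sup' (fun i => G.wS (Ss i) / f i) hmem
  calc G.wS Sstar / f k ≤ 3 * (G.wS (Ss i) / f i) := hineq
    _ ≤ 3 * ((Finset.Icc 1 n).sup' (Finset.nonempty_Icc.mpr hn1)
          fun i => G.wS (Ss i) / f i) := by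
        apply mul_le_mul_of_nonneg_left hle (by norm_num)
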